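/- Let Φ and h be as in the canonical construction and set d = 1 + rλ + sλ′. Then in any clause minimum prime pure Horn CNF representation of h, every clause whose variable set contains some v(j), j ∈ [t], has the form v(j) → u(ℓ) for some label ℓ ∈ L ∪ L′. -/

import Mathlib

open Finset

/-- A clause, given by its (fin)sets of positive and negative variables. -/
structure Clause (V : Type*) where
  pos : Finset V
  neg : Finset V
deriving DecidableEq

namespace Clause

variable {V : Type*}

/-- A genuine clause: no variable occurs both positively and negatively. -/
def IsClause (C : Clause V) : Prop := Disjoint C.pos C.neg

/-- Evaluation of a clause (as a disjunction of literals) under an assignment. -/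
def eval (C : Clause V) (a : V → Bool) : Prop :=
  (∃ v ∈ C.pos, a v = true) ∨ (∃ v ∈ C.neg, a v = false)

/-- A pure (definite) Horn clause: exactly one positive literal, its head. -/
def IsPureHorn (C : Clause V) : Prop := ∃ v, C.pos = {v}

end Clause

variable {V : Type*}

/-- Conjunction (as a predicate on assignments) of a set of clauses. -/
def evalSet (S : Set (Clause V)) (a : V → Bool) : Prop := ∀ C ∈ S, C.eval a

/-- Conjunction of the clauses of a CNF, i.e. of a finite set of clauses. -/
def evalCNF (Φ : Finset (Clause V)) (a : V → Bool) : Prop := ∀ C ∈ Φ, C.eval a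

/-- A CNF represents a Boolean function `h`. -/
def Represents (Φ : Finset (Clause V)) (h : (V → Bool) → Prop) : Prop :=
  ∀ a, evalCNF Φ a ↔ h a

/-- A pure Horn CNF: all clauses are pure Horn. -/
def IsPureHornCNF (Φ : Finset (Clause V)) : Prop :=
  ∀ C ∈ Φ, C.IsClause ∧ C.IsPureHorn

/-- The forward chaining closure of a set `Q` of variables with respect to the
pure Horn CNF `Φ`: the smallest set containing `Q` such that whenever `Φ` contains
a clause `S → v` with `S` inside the set, also `v` belongs to it. -/
def fcClosure (Φ : Finset (Clause V)) (Q : Set V) : Set V :=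
  ⋂₀ {T : Set V | Q ⊆ T ∧ ∀ C ∈ Φ, ∀ v : V, C.pos = {v} → ↑C.neg ⊆ T → v ∈ T}

/-- `C` is an implicate of `h`: every assignment falsifying `C` falsifies `h`. -/
def Implicate (h : (V → Bool) → Prop) (C : Clause V) : Prop :=
  ∀ a, ¬ C.eval a → ¬ h a

/-- `C` is a prime implicate of `h`: an implicate from which no literal can be
deleted while remaining an implicate. -/
def PrimeImplicate [DecidableEq V] (h : (V → Bool) → Prop) (C : Clause V) : Prop :=
  C.IsClause ∧ Implicate h C ∧
  (∀ v ∈ C.pos, ¬ Implicate h ⟨C.pos.erase v, C.neg⟩) ∧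
  (∀ v ∈ C.neg, ¬ Implicate h ⟨C.pos, C.neg.erase v⟩)

/-- `C₁` and `C₂` are resolvable on `v`: `v` occurs positively in `C₁`, negatively in
`C₂`, and no other variable occurs with opposite signs in them. -/
def Resolvable (C₁ C₂ : Clause V) (v : V) : Prop :=
  v ∈ C₁.pos ∧ v ∈ C₂.neg ∧
  ∀ w, w ≠ v → ¬(w ∈ C₁.pos ∧ w ∈ C₂.neg) ∧ ¬(w ∈ C₁.neg ∧ w ∈ C₂.pos)

/-- The resolvent `R(C₁,C₂) = (C₁ \ {v}) ∪ (C₂ \ {v̄})`. -/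
def resolventOf [DecidableEq V] (C₁ C₂ : Clause V) (v : V) : Clause V :=
  ⟨C₁.pos.erase v ∪ C₂.pos, C₁.neg ∪ C₂.neg.erase v⟩

/-- A set of clauses closed under resolution. -/
def ResClosed [DecidableEq V] (S : Set (Clause V)) : Prop :=
  ∀ C₁ ∈ S, ∀ C₂ ∈ S, ∀ v, Resolvable C₁ C₂ v → resolventOf C₁ C₂ v ∈ S

/-- The resolution closure of a set of clauses. -/
def resClosure [DecidableEq V] (S : Set (Clause V)) : Set (Clause V) :=
  ⋂₀ {T : Set (Clause V) | S ⊆ T ∧ ResClosed T}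

/-- `I(h)`: the resolution closure of the set of prime implicates of `h`. -/
def implSet [DecidableEq V] (h : (V → Bool) → Prop) : Set (Clause V) :=
  resClosure {C | PrimeImplicate h C}

/-- An exclusive set of clauses of `h`. -/
def ExclusiveSet [DecidableEq V] (h : (V → Bool) → Prop) (Xs : Set (Clause V)) : Prop :=
  Xs ⊆ implSet h ∧
  ∀ C₁ ∈ implSet h, ∀ C₂ ∈ implSet h, ∀ v, Resolvable C₁ C₂ v →
    resolventOf C₁ C₂ v ∈ Xs → C₁ ∈ Xs ∧ C₂ ∈ Xs

/-- The set of variables occurring in a CNF. -/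
def varsOf [DecidableEq V] (Φ : Finset (Clause V)) : Finset V :=
  Φ.biUnion fun C => C.pos ∪ C.neg


/-- A Label Cover instance: a bipartite graph with parts `X` and `Y` and edge set `E`,
label sets `A` (for `X`-vertices) and `B` (for `Y`-vertices), and a nonempty
constraint relation `cst e ⊆ A × B` for every edge `e ∈ E`. -/
structure LabelCover (X Y A B : Type*) where
  E : Finset (X × Y)
  cst : X × Y → Finset (A × B)
  cst_nonempty : ∀ e ∈ E, (cst e).Nonempty

namespace LabelCover

variable {X Y A B : Type*}

/-- A labeling `(f, g)` covers an edge `(x,y)` if for every label `b ∈ g y` there is a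
label `a ∈ f x` with `(a, b)` admissible for the edge. -/
def Covers (I : LabelCover X Y A B) (f : X → Finset A) (g : Y → Finset B)
    (e : X × Y) : Prop :=
  ∀ b ∈ g e.2, ∃ a ∈ f e.1, (a, b) ∈ I.cst e

/-- A total-cover: a labeling (assigning a nonempty label set to every `Y`-vertex)
covering every edge. -/
def IsTotalCover (I : LabelCover X Y A B) (f : X → Finset A) (g : Y → Finset B) : Prop :=
  (∀ y, (g y).Nonempty) ∧ ∀ e ∈ I.E, I.Covers f g e

/-- A total-cover is tight if every `Y`-vertex receives exactly one label. -/
def Tight (g : Y → Finset B) : Prop := ∀ y, (g y).card = 1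

end LabelCover

/-- The cost of a labeling: the average number of labels assigned to `X`-vertices. -/
def lcCost {X A : Type*} [Fintype X] (f : X → Finset A) : ℚ :=
  (∑ x, ((f x).card : ℚ)) / (Fintype.card X : ℚ)


/-- The labels of the refined Label Cover instance: `L ∪ L′`, where `L = ⋃_x L_x`
with `L_x = {x} × A` and `L′ = ⋃_y L′_y` with `L′_y = {y} × B`. -/
abbrev Lab (X Y A B : Type*) := (X × A) ⊕ (Y × B)

/-- The propositional variables of the canonical pure Horn CNF construction:
`u ℓ` for labels `ℓ ∈ L ∪ L′`, `e x y i` and `el x y ℓ′ i` for edges `(x,y)`,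
labels `ℓ′ ∈ L′_y` and indices `i ∈ [d]`, and `v j` for `j ∈ [t]`. -/
inductive PV (X Y A B : Type*) where
  | u : Lab X Y A B → PV X Y A B
  | e : X → Y → ℕ → PV X Y A B
  | el : X → Y → B → ℕ → PV X Y A B
  | v : ℕ → PV X Y A B
deriving DecidableEq

section Canonical

variable {X Y A B : Type*} [Fintype X] [Fintype Y] [Fintype A] [Fintype B]
  [DecidableEq X] [DecidableEq Y] [DecidableEq A] [DecidableEq B]

/-- The (open) neighborhood `N(y) = {z ∈ X : (z,y) ∈ E}`. -/
def Nbr (I : LabelCover X Y A B) (y : Y) : Finset X :=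
  Finset.univ.filter fun z => (z, y) ∈ I.E

/-- Clauses (a): `u(ℓ) ∧ u(ℓ′) → e(x,y,ℓ′,i)` for `(x,y) ∈ E`, `(ℓ,ℓ′) ∈ Π_{(x,y)}`,
`i ∈ [d]`. -/
def clA (I : LabelCover X Y A B) (d : ℕ) : Finset (Clause (PV X Y A B)) :=
  (I.E ×ˢ Finset.Icc 1 d).biUnion fun p =>
    (I.cst p.1).image fun ab =>
      ⟨{PV.el p.1.1 p.1.2 ab.2 p.2},
       {PV.u (Sum.inl (p.1.1, ab.1)), PV.u (Sum.inr (p.1.2, ab.2))}⟩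

/-- Clauses (b): `⋀_{z ∈ N(y)} e(z,y,ℓ′,i) → e(x,y,i)` for `(x,y) ∈ E`, `ℓ′ ∈ L′_y`,
`i ∈ [d]`. -/
def clB (I : LabelCover X Y A B) (d : ℕ) : Finset (Clause (PV X Y A B)) :=
  ((I.E ×ˢ (Finset.univ : Finset B)) ×ˢ Finset.Icc 1 d).image fun p =>
    ⟨{PV.e p.1.1.1 p.1.1.2 p.2},
     (Nbr I p.1.1.2).image fun z => PV.el z p.1.1.2 p.1.2 p.2⟩

/-- Clauses (c): `e(x,y,i) → e(x,y,ℓ′,i)` for `(x,y) ∈ E`, `ℓ′ ∈ L′_y`, `i ∈ [d]`. -/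
def clC (I : LabelCover X Y A B) (d : ℕ) : Finset (Clause (PV X Y A B)) :=
  ((I.E ×ˢ (Finset.univ : Finset B)) ×ˢ Finset.Icc 1 d).image fun p =>
    ⟨{PV.el p.1.1.1 p.1.1.2 p.1.2 p.2}, {PV.e p.1.1.1 p.1.1.2 p.2}⟩

/-- The common body of the clauses (d): all variables `e(x,y,i)`, `(x,y) ∈ E`, `i ∈ [d]`. -/
def bigBody (I : LabelCover X Y A B) (d : ℕ) : Finset (PV X Y A B) :=
  (I.E ×ˢ Finset.Icc 1 d).image fun p => PV.e p.1.1 p.1.2 p.2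

/-- Clauses (d): `⋀_{i ∈ [d]} ⋀_{(x,y) ∈ E} e(x,y,i) → u(ℓ)` for `ℓ ∈ L ∪ L′`. -/
def clD (I : LabelCover X Y A B) (d : ℕ) : Finset (Clause (PV X Y A B)) :=
  (Finset.univ : Finset (Lab X Y A B)).image fun ℓ => ⟨{PV.u ℓ}, bigBody I d⟩

/-- Clauses (e): `v(j) → u(ℓ)` for `j ∈ [t]`, `ℓ ∈ L ∪ L′`. -/
def clE (X Y A B : Type*) [Fintype X] [Fintype Y] [Fintype A] [Fintype B]
    [DecidableEq X] [DecidableEq Y] [DecidableEq A] [DecidableEq B]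
    (t : ℕ) : Finset (Clause (PV X Y A B)) :=
  (Finset.Icc 1 t ×ˢ (Finset.univ : Finset (Lab X Y A B))).image fun p =>
    ⟨{PV.u p.2}, {PV.v p.1}⟩

/-- The canonical formula `Ψ`: clauses of types (a)–(d). -/
def PsiCNF (I : LabelCover X Y A B) (d : ℕ) : Finset (Clause (PV X Y A B)) :=
  clA I d ∪ clB I d ∪ clC I d ∪ clD I d

/-- The canonical formula `Φ`: clauses of types (a)–(e). -/
def PhiCNF (I : LabelCover X Y A B) (d t : ℕ) : Finset (Clause (PV X Y A B)) :=
  PsiCNF I d ∪ clE X Y A B t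

/-- The pure Horn function `h` represented by the canonical formula `Φ`. -/
def hFun (I : LabelCover X Y A B) (d t : ℕ) : (PV X Y A B → Bool) → Prop :=
  fun a => evalCNF (PhiCNF I d t) a

/-- The pure Horn function `g` represented by the canonical formula `Ψ`. -/
def gFun (I : LabelCover X Y A B) (d : ℕ) : (PV X Y A B → Bool) → Prop :=
  fun a => evalCNF (PsiCNF I d) a

end Canonical


set_option linter.unusedSectionVars false

section Helpers

variable {V : Type*} [DecidableEq V]

lemma eval_head {w : V} {N : Finset V} {a : V → Bool}
    (h : Clause.eval ⟨{w}, N⟩ a) (hN : ∀ n ∈ N, a n = true) : a w = true := by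
  rcases h with ⟨v, hv, hva⟩ | ⟨v, hv, hva⟩
  · have : v = w := by simpa using hv
    rwa [this] at hva
  · rw [hN v hv] at hva; exact absurd hva (by decide)

lemma eval_congr' {C : Clause V} {a b : V → Bool}
    (h : ∀ p ∈ C.pos ∪ C.neg, a p = b p) : C.eval a ↔ C.eval b := by
  unfold Clause.eval
  constructor
  · rintro (⟨v, hv, hva⟩ | ⟨v, hv, hva⟩)
    · exact Or.inl ⟨v, hv, by rw [← h v (Finset.mem_union_left _ hv)]; exact hva⟩
    · exact Or.inr ⟨v, hv, by rw [← h v (Finset.mem_union_right _ hv)]; exact hva⟩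
  · rintro (⟨v, hv, hva⟩ | ⟨v, hv, hva⟩)
    · exact Or.inl ⟨v, hv, by rw [h v (Finset.mem_union_left _ hv)]; exact hva⟩
    · exact Or.inr ⟨v, hv, by rw [h v (Finset.mem_union_right _ hv)]; exact hva⟩

end Helpers

section MainProof

variable {X Y A B : Type*} [Fintype X] [Fintype Y] [Fintype A] [Fintype B]
  [DecidableEq X] [DecidableEq Y] [DecidableEq A] [DecidableEq B]

/-- The possible heads of clauses of `Φ`. -/
def HeadOK (I : LabelCover X Y A B) (d : ℕ) : PV X Y A B → Prop
  | .u _ => True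
  | .e x y i => (x, y) ∈ I.E ∧ i ∈ Finset.Icc 1 d
  | .el x y _ i => (x, y) ∈ I.E ∧ i ∈ Finset.Icc 1 d
  | .v _ => False

lemma mem_clA {I : LabelCover X Y A B} {d : ℕ} {x : X} {y : Y} {a : A} {b : B} {i : ℕ}
    (he : (x, y) ∈ I.E) (hab : (a, b) ∈ I.cst (x, y)) (hi : i ∈ Finset.Icc 1 d) :
    (⟨{PV.el x y b i}, {PV.u (Sum.inl (x, a)), PV.u (Sum.inr (y, b))}⟩ : Clause (PV X Y A B))
      ∈ clA I d := by
  simp only [clA, Finset.mem_biUnion, Finset.mem_product, Finset.mem_image]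
  exact ⟨((x, y), i), ⟨he, hi⟩, (a, b), hab, rfl⟩

lemma mem_clB {I : LabelCover X Y A B} {d : ℕ} {x : X} {y : Y} {i : ℕ} (b : B)
    (he : (x, y) ∈ I.E) (hi : i ∈ Finset.Icc 1 d) :
    (⟨{PV.e x y i}, (Nbr I y).image fun z => PV.el z y b i⟩ : Clause (PV X Y A B))
      ∈ clB I d := by
  simp only [clB, Finset.mem_image, Finset.mem_product, Finset.mem_univ]
  exact ⟨(((x, y), b), i), ⟨⟨he, trivial⟩, hi⟩, rfl⟩

lemma mem_clC {I : LabelCover X Y A B} {d : ℕ} {x : X} {y : Y} {i : ℕ} (b : B)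
    (he : (x, y) ∈ I.E) (hi : i ∈ Finset.Icc 1 d) :
    (⟨{PV.el x y b i}, {PV.e x y i}⟩ : Clause (PV X Y A B)) ∈ clC I d := by
  simp only [clC, Finset.mem_image, Finset.mem_product, Finset.mem_univ]
  exact ⟨(((x, y), b), i), ⟨⟨he, trivial⟩, hi⟩, rfl⟩

lemma mem_clD {I : LabelCover X Y A B} {d : ℕ} (ℓ : Lab X Y A B) :
    (⟨{PV.u ℓ}, bigBody I d⟩ : Clause (PV X Y A B)) ∈ clD I d :=
  Finset.mem_image.2 ⟨ℓ, Finset.mem_univ _, rfl⟩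

lemma mem_clE {t : ℕ} {j : ℕ} (hj : j ∈ Finset.Icc 1 t) (ℓ : Lab X Y A B) :
    (⟨{PV.u ℓ}, {PV.v j}⟩ : Clause (PV X Y A B)) ∈ clE X Y A B t := by
  simp only [clE, Finset.mem_image, Finset.mem_product, Finset.mem_univ]
  exact ⟨(j, ℓ), ⟨hj, trivial⟩, rfl⟩

lemma clA_subset_psi {I : LabelCover X Y A B} {d : ℕ} : clA I d ⊆ PsiCNF I d := by
  intro C hC
  exact Finset.mem_union_left _ (Finset.mem_union_left _ (Finset.mem_union_left _ hC))

lemma clB_subset_psi {I : LabelCover X Y A B} {d : ℕ} : clB I d ⊆ PsiCNF I d := by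
  intro C hC
  exact Finset.mem_union_left _ (Finset.mem_union_left _ (Finset.mem_union_right _ hC))

lemma clC_subset_psi {I : LabelCover X Y A B} {d : ℕ} : clC I d ⊆ PsiCNF I d := by
  intro C hC
  exact Finset.mem_union_left _ (Finset.mem_union_right _ hC)

lemma clD_subset_psi {I : LabelCover X Y A B} {d : ℕ} : clD I d ⊆ PsiCNF I d := by
  intro C hC
  exact Finset.mem_union_right _ hC

lemma phi_cases {I : LabelCover X Y A B} {d t : ℕ} {C : Clause (PV X Y A B)}
    (hC : C ∈ PhiCNF I d t) :
    (∃ x y a b i, (x, y) ∈ I.E ∧ (a, b) ∈ I.cst (x, y) ∧ i ∈ Finset.Icc 1 d ∧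
      C = ⟨{PV.el x y b i}, {PV.u (Sum.inl (x, a)), PV.u (Sum.inr (y, b))}⟩) ∨
    (∃ x y b i, (x, y) ∈ I.E ∧ i ∈ Finset.Icc 1 d ∧
      C = ⟨{PV.e x y i}, (Nbr I y).image fun z => PV.el z y b i⟩) ∨
    (∃ x y b i, (x, y) ∈ I.E ∧ i ∈ Finset.Icc 1 d ∧
      C = ⟨{PV.el x y b i}, {PV.e x y i}⟩) ∨
    (∃ ℓ : Lab X Y A B, C = ⟨{PV.u ℓ}, bigBody I d⟩) ∨
    (∃ j ℓ, j ∈ Finset.Icc 1 t ∧ C = ⟨{PV.u ℓ}, {PV.v j}⟩) := by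
  simp only [PhiCNF, PsiCNF, clA, clB, clC, clD, clE, Finset.mem_union, Finset.mem_biUnion,
    Finset.mem_image, Finset.mem_product, Finset.mem_univ, and_true, true_and] at hC
  rcases hC with (((⟨⟨⟨x, y⟩, i⟩, ⟨he, hi⟩, ⟨a, b⟩, hab, rfl⟩ |
      ⟨⟨⟨⟨x, y⟩, b⟩, i⟩, ⟨he, hi⟩, rfl⟩) | ⟨⟨⟨⟨x, y⟩, b⟩, i⟩, ⟨he, hi⟩, rfl⟩) |
      ⟨ℓ, rfl⟩) | ⟨⟨j, ℓ⟩, hj, rfl⟩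
  · exact Or.inl ⟨x, y, a, b, i, he, hab, hi, rfl⟩
  · exact Or.inr (Or.inl ⟨x, y, b, i, he, hi, rfl⟩)
  · exact Or.inr (Or.inr (Or.inl ⟨x, y, b, i, he, hi, rfl⟩))
  · exact Or.inr (Or.inr (Or.inr (Or.inl ⟨ℓ, rfl⟩)))
  · exact Or.inr (Or.inr (Or.inr (Or.inr ⟨j, ℓ, hj, rfl⟩)))

end MainProof

section MainProof2
set_option linter.unusedSectionVars false

variable {X Y A B : Type*} [Fintype X] [Fintype Y] [Fintype A] [Fintype B]
  [DecidableEq X] [DecidableEq Y] [DecidableEq A] [DecidableEq B]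

lemma mem_bigBody {I : LabelCover X Y A B} {d : ℕ} {p : PV X Y A B} :
    p ∈ bigBody I d ↔ ∃ x y i, (x, y) ∈ I.E ∧ i ∈ Finset.Icc 1 d ∧ p = PV.e x y i := by
  simp only [bigBody, Finset.mem_image, Finset.mem_product, Prod.exists]
  constructor
  · rintro ⟨x, y, i, ⟨he, hi⟩, rfl⟩
    exact ⟨x, y, i, he, hi, rfl⟩
  · rintro ⟨x, y, i, he, hi, rfl⟩
    exact ⟨x, y, i, ⟨he, hi⟩, rfl⟩

lemma phi_head {I : LabelCover X Y A B} {d t : ℕ} {C : Clause (PV X Y A B)}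
    (hC : C ∈ PhiCNF I d t) : ∃ w, C.pos = {w} ∧ HeadOK I d w := by
  rcases phi_cases hC with ⟨x, y, a, b, i, he, _, hi, rfl⟩ | ⟨x, y, b, i, he, hi, rfl⟩ |
    ⟨x, y, b, i, he, hi, rfl⟩ | ⟨ℓ, rfl⟩ | ⟨j, ℓ, hj, rfl⟩
  · exact ⟨_, rfl, ⟨he, hi⟩⟩
  · exact ⟨_, rfl, ⟨he, hi⟩⟩
  · exact ⟨_, rfl, ⟨he, hi⟩⟩
  · exact ⟨_, rfl, trivial⟩
  · exact ⟨_, rfl, trivial⟩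

lemma phi_v_mem {I : LabelCover X Y A B} {d t : ℕ} {C : Clause (PV X Y A B)}
    (hC : C ∈ PhiCNF I d t) {k : ℕ} (hk : PV.v k ∈ C.pos ∪ C.neg) :
    k ∈ Finset.Icc 1 t ∧ ∃ ℓ, C = ⟨{PV.u ℓ}, {PV.v k}⟩ := by
  rcases phi_cases hC with ⟨x, y, a, b, i, he, _, hi, rfl⟩ | ⟨x, y, b, i, he, hi, rfl⟩ |
    ⟨x, y, b, i, he, hi, rfl⟩ | ⟨ℓ, rfl⟩ | ⟨j, ℓ, hj, rfl⟩
  · simp at hk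
  · simp only [Finset.mem_union, Finset.mem_singleton, Finset.mem_image] at hk
    rcases hk with h | ⟨z, _, h⟩ <;> simp at h
  · simp at hk
  · simp only [Finset.mem_union, Finset.mem_singleton, mem_bigBody] at hk
    rcases hk with h | ⟨x, y, i, _, _, h⟩ <;> simp at h
  · simp only [Finset.mem_union, Finset.mem_singleton] at hk
    rcases hk with h | h
    · simp at h
    · have : k = j := by simpa using h
      subst this
      exact ⟨hj, ℓ, rfl⟩

lemma psi_v_free {I : LabelCover X Y A B} {d : ℕ} {C : Clause (PV X Y A B)}
    (hC : C ∈ PsiCNF I d) (k : ℕ) : PV.v k ∉ C.pos ∪ C.neg := by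
  intro hk
  have hC' : C ∈ PhiCNF I d 0 := Finset.mem_union_left _ hC
  have := (phi_v_mem hC' hk).1
  simp at this

lemma derive_all {I : LabelCover X Y A B} {d : ℕ} {c : PV X Y A B → Bool}
    (hc : evalCNF (PsiCNF I d) c) (P : Lab X Y A B → Prop)
    (hU : ∀ ℓ, P ℓ → c (PV.u ℓ) = true)
    (hcov : ∀ x y, (x, y) ∈ I.E → ∃ b, P (Sum.inr (y, b)) ∧
      ∀ z ∈ Nbr I y, ∃ a, P (Sum.inl (z, a)) ∧ (a, b) ∈ I.cst (z, y)) :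
    ∀ w, HeadOK I d w → c w = true := by
  have key : ∀ x y, (x, y) ∈ I.E → ∀ i ∈ Finset.Icc 1 d,
      c (PV.e x y i) = true ∧ ∀ b', c (PV.el x y b' i) = true := by
    intro x y he i hi
    obtain ⟨b, hbP, hzz⟩ := hcov x y he
    have hel : ∀ z ∈ Nbr I y, c (PV.el z y b i) = true := by
      intro z hz
      obtain ⟨a, haP, hab⟩ := hzz z hz
      have hz' : (z, y) ∈ I.E := by simpa [Nbr] using hz
      refine eval_head (hc _ (clA_subset_psi (mem_clA hz' hab hi))) ?_
      intro n hn
      simp only [Finset.mem_insert, Finset.mem_singleton] at hn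
      rcases hn with rfl | rfl
      · exact hU _ haP
      · exact hU _ hbP
    have he' : c (PV.e x y i) = true := by
      refine eval_head (hc _ (clB_subset_psi (mem_clB b he hi))) ?_
      intro n hn
      simp only [Finset.mem_image] at hn
      obtain ⟨z, hz, rfl⟩ := hn
      exact hel z hz
    refine ⟨he', fun b' => ?_⟩
    refine eval_head (hc _ (clC_subset_psi (mem_clC b' he hi))) ?_
    intro n hn
    simp only [Finset.mem_singleton] at hn
    subst hn
    exact he'
  intro w hw
  match w, hw with
  | PV.e x y i, ⟨he, hi⟩ => exact (key x y he i hi).1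
  | PV.el x y b i, ⟨he, hi⟩ => exact (key x y he i hi).2 b
  | PV.u ℓ, _ =>
    refine eval_head (hc _ (clD_subset_psi (mem_clD ℓ))) ?_
    intro n hn
    obtain ⟨x, y, i, he, hi, rfl⟩ := mem_bigBody.1 hn
    exact (key x y he i hi).1

lemma cover_univ {I : LabelCover X Y A B} (hfeas : ∃ f g, I.IsTotalCover f g) :
    ∀ x y, (x, y) ∈ I.E → ∃ b : B, True ∧
      ∀ z ∈ Nbr I y, ∃ a : A, True ∧ (a, b) ∈ I.cst (z, y) := by
  obtain ⟨f, g, hg, hcw⟩ := hfeas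
  intro x y _
  obtain ⟨b, hb⟩ := hg y
  refine ⟨b, trivial, fun z hz => ?_⟩
  have hz' : (z, y) ∈ I.E := by simpa [Nbr] using hz
  obtain ⟨a, _, hab⟩ := hcw (z, y) hz' b hb
  exact ⟨a, trivial, hab⟩

lemma impl_vj {I : LabelCover X Y A B} {d t : ℕ}
    (hfeas : ∃ f g, I.IsTotalCover f g) {j : ℕ} (hj : j ∈ Finset.Icc 1 t)
    {w : PV X Y A B} (hw : HeadOK I d w) :
    Implicate (hFun I d t) (⟨{w}, {PV.v j}⟩ : Clause (PV X Y A B)) := by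
  intro a hne ha
  apply hne
  by_cases hv : a (PV.v j) = false
  · exact Or.inr ⟨PV.v j, Finset.mem_singleton_self _, hv⟩
  have hv' : a (PV.v j) = true := by
    cases h : a (PV.v j)
    · exact absurd h hv
    · rfl
  have hall : ∀ ℓ : Lab X Y A B, a (PV.u ℓ) = true := by
    intro ℓ
    refine eval_head (ha _ (Finset.mem_union_right _ (mem_clE hj ℓ))) ?_
    intro n hn
    simp only [Finset.mem_singleton] at hn
    subst hn
    exact hv'
  have hc : evalCNF (PsiCNF I d) a := fun C hC => ha C (Finset.mem_union_left _ hC)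
  exact Or.inl ⟨w, Finset.mem_singleton_self _,
    derive_all hc (fun _ => True) (fun ℓ _ => hall ℓ) (cover_univ hfeas) w hw⟩

end MainProof2

section ShapeProof
set_option linter.unusedSectionVars false

variable {X Y A B : Type*} [Fintype X] [Fintype Y] [Fintype A] [Fintype B]
  [DecidableEq X] [DecidableEq Y] [DecidableEq A] [DecidableEq B]

lemma head_ok {I : LabelCover X Y A B} {d t : ℕ} {C : Clause (PV X Y A B)}
    (hpr : PrimeImplicate (hFun I d t) C) {p : PV X Y A B} (hpos : C.pos = {p}) :
    HeadOK I d p := by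
  by_contra hno
  set a : PV X Y A B → Bool := fun q => if q = p then false else true with ha
  have hha : hFun I d t a := by
    intro C' hC'
    obtain ⟨w, hwpos, hwOK⟩ := phi_head hC'
    have hwp : w ≠ p := fun h => hno (h ▸ hwOK)
    exact Or.inl ⟨w, by rw [hwpos]; exact Finset.mem_singleton_self _, by simp [ha, hwp]⟩
  refine hpr.2.1 a ?_ hha
  rintro (⟨v, hv, hva⟩ | ⟨v, hv, hva⟩)
  · rw [hpos, Finset.mem_singleton] at hv
    subst hv
    simp [ha] at hva
  · have hvp : v ≠ p := by
      intro h
      have hvpos : v ∈ C.pos := by rw [hpos, Finset.mem_singleton]; exact h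
      exact Finset.disjoint_left.1 hpr.1 hvpos hv
    simp [ha, hvp] at hva

lemma shape_lemma {I : LabelCover X Y A B} {d t : ℕ}
    (hfeas : ∃ f g, I.IsTotalCover f g)
    {Υ : Finset (Clause (PV X Y A B))}
    (hPH : IsPureHornCNF Υ)
    (hprime : ∀ C ∈ Υ, PrimeImplicate (hFun I d t) C)
    {C : Clause (PV X Y A B)} (hC : C ∈ Υ) {k : ℕ}
    (hk : PV.v k ∈ C.pos ∪ C.neg) :
    k ∈ Finset.Icc 1 t ∧ ∃ w, HeadOK I d w ∧ C = ⟨{w}, {PV.v k}⟩ := by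
  obtain ⟨p, hpos⟩ := (hPH C hC).2
  have hpr := hprime C hC
  have hpOK : HeadOK I d p := head_ok hpr hpos
  have hpne : ∀ m : ℕ, p ≠ PV.v m := by
    intro m h
    rw [h] at hpOK
    exact hpOK
  have hkneg : PV.v k ∈ C.neg := by
    rcases Finset.mem_union.1 hk with h | h
    · rw [hpos, Finset.mem_singleton] at h
      exact absurd h.symm (hpne k)
    · exact h
  have hkt : k ∈ Finset.Icc 1 t := by
    by_contra hkt
    have hni := hpr.2.2.2 (PV.v k) hkneg
    rw [Implicate] at hni
    push_neg at hni
    obtain ⟨a, hna, ha⟩ := hni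
    -- extract from hna
    have hna1 : a p = false := by
      cases h : a p
      · rfl
      · exact absurd (Or.inl ⟨p, by rw [hpos]; exact Finset.mem_singleton_self p, h⟩) hna
    have hna2 : ∀ n ∈ C.neg.erase (PV.v k), a n = true := by
      intro n hn
      cases h : a n
      · exact absurd (Or.inr ⟨n, hn, h⟩) hna
      · rfl
    set a' : PV X Y A B → Bool := fun q => if q = PV.v k then true else a q with ha'
    have hha' : hFun I d t a' := by
      intro C' hC'
      have hvk : ∀ q ∈ C'.pos ∪ C'.neg, a q = a' q := by
        intro q hq
        have : q ≠ PV.v k := by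
          rintro rfl
          exact hkt (phi_v_mem hC' hq).1
        simp [ha', this]
      exact (eval_congr' hvk).1 (ha C' hC')
    refine hpr.2.1 a' ?_ hha'
    rintro (⟨v, hv, hva⟩ | ⟨v, hv, hva⟩)
    · rw [hpos, Finset.mem_singleton] at hv
      subst hv
      rw [ha'] at hva
      simp only [if_neg (hpne k)] at hva
      rw [hna1] at hva
      exact absurd hva (by decide)
    · by_cases hvk : v = PV.v k
      · subst hvk
        simp [ha'] at hva
      · have : a' v = a v := by simp [ha', hvk]
        rw [this, hna2 v (Finset.mem_erase.2 ⟨hvk, hv⟩)] at hva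
        exact absurd hva (by decide)
  have hneg : C.neg = {PV.v k} := by
    refine Finset.Subset.antisymm ?_ (Finset.singleton_subset_iff.2 hkneg)
    intro n hn
    rw [Finset.mem_singleton]
    by_contra hne
    have hni := hpr.2.2.2 n hn
    rw [Implicate] at hni
    push_neg at hni
    obtain ⟨a, hna, ha⟩ := hni
    have hna1 : a p = false := by
      cases h : a p
      · rfl
      · exact absurd (Or.inl ⟨p, by rw [hpos]; exact Finset.mem_singleton_self p, h⟩) hna
    have hvk : a (PV.v k) = true := by
      cases h : a (PV.v k)
      · exact absurd (Or.inr ⟨PV.v k, Finset.mem_erase.2 ⟨fun hh => hne hh.symm, hkneg⟩, h⟩) hna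
      · rfl
    refine impl_vj hfeas hkt hpOK a ?_ ha
    rintro (⟨v, hv, hva⟩ | ⟨v, hv, hva⟩)
    · rw [Finset.mem_singleton] at hv
      subst hv
      rw [hna1] at hva
      exact absurd hva (by decide)
    · rw [Finset.mem_singleton] at hv
      subst hv
      rw [hvk] at hva
      exact absurd hva (by decide)
  refine ⟨hkt, p, hpOK, ?_⟩
  have : C = ⟨C.pos, C.neg⟩ := rfl
  rw [this, hpos, hneg]

end ShapeProof

section ReplaceProof
set_option linter.unusedSectionVars false

variable {X Y A B : Type*} [Fintype X] [Fintype Y] [Fintype A] [Fintype B]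
  [DecidableEq X] [DecidableEq Y] [DecidableEq A] [DecidableEq B]

/-- Kill all `v`-variables in an assignment. -/
def killV (a : PV X Y A B → Bool) : PV X Y A B → Bool
  | PV.v _ => false
  | q => a q

lemma killV_nonv {a : PV X Y A B → Bool} {q : PV X Y A B}
    (hq : ∀ k : ℕ, q ≠ PV.v k) : killV a q = a q := by
  cases q with
  | v m => exact absurd rfl (hq m)
  | u ℓ => rfl
  | e x y i => rfl
  | el x y b i => rfl

lemma killV_v {a : PV X Y A B → Bool} (k : ℕ) : killV a (PV.v k) = false := rfl

lemma replace_card {I : LabelCover X Y A B} {d t : ℕ}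
    {Υ : Finset (Clause (PV X Y A B))}
    (hshape : ∀ C ∈ Υ, ∀ k : ℕ, PV.v k ∈ C.pos ∪ C.neg →
      k ∈ Finset.Icc 1 t ∧ ∃ w, HeadOK I d w ∧ C = ⟨{w}, {PV.v k}⟩)
    (hPH : IsPureHornCNF Υ)
    (hrep : Represents Υ (hFun I d t))
    (hmin : ∀ Υ' : Finset (Clause (PV X Y A B)), IsPureHornCNF Υ' →
      Represents Υ' (hFun I d t) → Υ.card ≤ Υ'.card)
    {j : ℕ} (hj : j ∈ Finset.Icc 1 t)
    (K : Finset (Lab X Y A B))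
    (hKder : ∀ c : PV X Y A B → Bool, evalCNF (PsiCNF I d) c →
      (∀ ℓ ∈ K, c (PV.u ℓ) = true) →
      ∀ C' ∈ Υ.filter (fun C => PV.v j ∈ C.pos ∪ C.neg), ∀ w ∈ C'.pos, c w = true) :
    (Υ.filter (fun C => PV.v j ∈ C.pos ∪ C.neg)).card ≤ K.card := by
  classical
  set ΥV := Υ.filter (fun C => PV.v j ∈ C.pos ∪ C.neg) with hΥV
  set Υ'' := (Υ \ ΥV) ∪ K.image (fun ℓ => (⟨{PV.u ℓ}, {PV.v j}⟩ : Clause (PV X Y A B)))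
    with hΥ''
  have hPH'' : IsPureHornCNF Υ'' := by
    intro C hC
    rcases Finset.mem_union.1 hC with h | h
    · exact hPH C (Finset.mem_sdiff.1 h).1
    · obtain ⟨ℓ, _, rfl⟩ := Finset.mem_image.1 h
      exact ⟨by simp [Clause.IsClause], ⟨PV.u ℓ, rfl⟩⟩
  have hrep'' : Represents Υ'' (hFun I d t) := by
    intro a
    constructor
    · intro hA
      have hbΥ : evalCNF Υ (killV a) := by
        intro C' hC'
        by_cases hv : ∃ k : ℕ, PV.v k ∈ C'.pos ∪ C'.neg
        · obtain ⟨k, hk⟩ := hv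
          obtain ⟨-, w, -, hEq⟩ := hshape C' hC' k hk
          rw [hEq]
          exact Or.inr ⟨PV.v k, Finset.mem_singleton_self _, killV_v k⟩
        · push_neg at hv
          have hC'' : C' ∈ Υ \ ΥV := Finset.mem_sdiff.2 ⟨hC', fun h =>
            (hv j) (Finset.mem_filter.1 h).2⟩
          have := hA C' (Finset.mem_union_left _ hC'')
          refine (eval_congr' ?_).1 this
          intro p hp
          exact (killV_nonv (fun k hk => (hv k) (hk ▸ hp))).symm
      have hhb : hFun I d t (killV a) := (hrep (killV a)).1 hbΥ
      have haΨ : evalCNF (PsiCNF I d) a := by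
        intro C' hC'
        have := hhb C' (Finset.mem_union_left _ hC')
        refine (eval_congr' ?_).1 this
        intro p hp
        exact killV_nonv (fun k hk => psi_v_free hC' k (hk ▸ hp))
      have haΥ : evalCNF Υ a := by
        intro C' hC'
        by_cases hmem : C' ∈ ΥV
        · have hvj := (Finset.mem_filter.1 hmem).2
          obtain ⟨-, w, hwOK, hEq⟩ := hshape C' hC' j hvj
          by_cases hv : a (PV.v j) = true
          · have hKu : ∀ ℓ ∈ K, a (PV.u ℓ) = true := by
              intro ℓ hℓ
              have := hA _ (Finset.mem_union_right _ (Finset.mem_image_of_mem _ hℓ))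
              refine eval_head this ?_
              intro n hn
              rw [Finset.mem_singleton] at hn
              subst hn
              exact hv
            have hw := hKder a haΨ hKu C' hmem w (by rw [hEq]; exact Finset.mem_singleton_self _)
            rw [hEq]
            exact Or.inl ⟨w, Finset.mem_singleton_self _, hw⟩
          · rw [hEq]
            exact Or.inr ⟨PV.v j, Finset.mem_singleton_self _, by
              cases h : a (PV.v j)
              · rfl
              · exact absurd h hv⟩
        · exact hA C' (Finset.mem_union_left _ (Finset.mem_sdiff.2 ⟨hC', hmem⟩))
      exact (hrep a).1 haΥ
    · intro ha
      intro C' hC'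
      rcases Finset.mem_union.1 hC' with h | h
      · exact (hrep a).2 ha C' (Finset.mem_sdiff.1 h).1
      · obtain ⟨ℓ, _, rfl⟩ := Finset.mem_image.1 h
        exact ha _ (Finset.mem_union_right _ (mem_clE hj ℓ))
  have h1 : Υ.card ≤ Υ''.card := hmin Υ'' hPH'' hrep''
  have h2 : Υ''.card ≤ (Υ.card - ΥV.card) + K.card := by
    calc Υ''.card ≤ (Υ \ ΥV).card +
        (K.image (fun ℓ => (⟨{PV.u ℓ}, {PV.v j}⟩ : Clause (PV X Y A B)))).card :=
          Finset.card_union_le _ _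
      _ ≤ (Υ.card - ΥV.card) + K.card := by
          gcongr
          · rw [Finset.card_sdiff_of_subset (Finset.filter_subset _ _)]
          · exact Finset.card_image_le
  have h3 : ΥV.card ≤ Υ.card := Finset.card_filter_le _ _
  omega

end ReplaceProof

section KillVExtra
variable {X Y A B : Type*}

lemma bool_ff {b : Bool} (h : ¬ b = true) : b = false := by
  cases b
  · rfl
  · exact absurd rfl h

lemma killV_u (a : PV X Y A B → Bool) (ℓ : Lab X Y A B) :
    killV a (PV.u ℓ) = a (PV.u ℓ) := rfl

lemma killV_e (a : PV X Y A B → Bool) (x : X) (y : Y) (i : ℕ) :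
    killV a (PV.e x y i) = a (PV.e x y i) := rfl

lemma killV_el (a : PV X Y A B → Bool) (x : X) (y : Y) (b : B) (i : ℕ) :
    killV a (PV.el x y b i) = a (PV.el x y b i) := rfl

end KillVExtra

/-- With `d = 1 + rλ + sλ′`, in any clause minimum prime pure Horn
CNF representation `Υ` of the canonical function `h`, every clause whose variable set
contains some `v(j)`, `j ∈ [t]`, has the form `v(j) → u(ℓ)` for a label
`ℓ ∈ L ∪ L′`. -/
theorem min_rep_vj_clause_shape
    {X Y A B : Type*} [Fintype X] [Fintype Y] [Fintype A] [Fintype B]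
    [DecidableEq X] [DecidableEq Y] [DecidableEq A] [DecidableEq B]
    [Nonempty X] [Nonempty Y]
    (I : LabelCover X Y A B) (d t : ℕ) (ht : 1 ≤ t)
    (hd : d = 1 + Fintype.card X * Fintype.card A + Fintype.card Y * Fintype.card B)
    (hnoIsoX : ∀ x : X, ∃ y, (x, y) ∈ I.E)
    (hnoIsoY : ∀ y : Y, ∃ x, (x, y) ∈ I.E)
    (hfeas : ∃ f g, I.IsTotalCover f g)
    (Υ : Finset (Clause (PV X Y A B)))
    (hPH : IsPureHornCNF Υ)
    (hprime : ∀ C ∈ Υ, PrimeImplicate (hFun I d t) C)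
    (hrep : Represents Υ (hFun I d t))
    (hmin : ∀ Υ' : Finset (Clause (PV X Y A B)), IsPureHornCNF Υ' →
      Represents Υ' (hFun I d t) → Υ.card ≤ Υ'.card) :
    ∀ C ∈ Υ, ∀ j ∈ Finset.Icc 1 t, PV.v j ∈ C.pos ∪ C.neg →
      ∃ ℓ : Lab X Y A B, C = ⟨{PV.u ℓ}, {PV.v j}⟩ := by
  classical
  intro C hC j hj hvj
  have hshape : ∀ C' ∈ Υ, ∀ k : ℕ, PV.v k ∈ C'.pos ∪ C'.neg →
      k ∈ Finset.Icc 1 t ∧ ∃ w, HeadOK I d w ∧ C' = ⟨{w}, {PV.v k}⟩ :=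
    fun C' hC' k hk => shape_lemma hfeas hPH hprime hC' hk
  obtain ⟨-, w, hwOK, hCeq⟩ := hshape C hC j hvj
  set ΥV := Υ.filter (fun C' => PV.v j ∈ C'.pos ∪ C'.neg) with hΥVdef
  have hCV : C ∈ ΥV := Finset.mem_filter.2 ⟨hC, hvj⟩
  have hlab : Fintype.card (Lab X Y A B) =
      Fintype.card X * Fintype.card A + Fintype.card Y * Fintype.card B := by
    simp
  have hcard1 : ΥV.card ≤ Fintype.card (Lab X Y A B) := by
    have hder : ∀ c : PV X Y A B → Bool, evalCNF (PsiCNF I d) c →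
        (∀ ℓ ∈ (Finset.univ : Finset (Lab X Y A B)), c (PV.u ℓ) = true) →
        ∀ C' ∈ Υ.filter (fun C'' => PV.v j ∈ C''.pos ∪ C''.neg),
          ∀ w' ∈ C'.pos, c w' = true := by
      intro c hcΨ hcu C' hC' w' hw'
      obtain ⟨-, w'', hOK, hEq⟩ := hshape C' (Finset.mem_filter.1 hC').1 j
        (Finset.mem_filter.1 hC').2
      have hww : w' = w'' := by rw [hEq] at hw'; simpa using hw'
      subst hww
      exact derive_all hcΨ (fun _ => True) (fun ℓ _ => hcu ℓ (Finset.mem_univ _))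
        (cover_univ hfeas) w' hOK
    have := replace_card hshape hPH hrep hmin hj Finset.univ hder
    simpa only [Finset.card_univ] using this
  set U₀ : Finset (Lab X Y A B) :=
    Finset.univ.filter (fun ℓ => (⟨{PV.u ℓ}, {PV.v j}⟩ : Clause (PV X Y A B)) ∈ Υ)
    with hU₀def
  set Ycov : Y → Prop := fun y => ∃ b, Sum.inr (y, b) ∈ U₀ ∧
      ∀ z ∈ Nbr I y, ∃ a, Sum.inl (z, a) ∈ U₀ ∧ (a, b) ∈ I.cst (z, y) with hYdef
  by_cases hcov : ∀ x y, (x, y) ∈ I.E → Ycov y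
  · -- Case A: the labels heading the v(j)-clauses already cover everything.
    have hA : (∀ ℓ : Lab X Y A B, w ≠ PV.u ℓ) → False := by
      intro hwne
      have hder : ∀ c : PV X Y A B → Bool, evalCNF (PsiCNF I d) c →
          (∀ ℓ ∈ U₀, c (PV.u ℓ) = true) →
          ∀ C' ∈ Υ.filter (fun C'' => PV.v j ∈ C''.pos ∪ C''.neg),
            ∀ w' ∈ C'.pos, c w' = true := by
        intro c hcΨ hcu C' hC' w' hw'
        obtain ⟨-, w'', hOK, hEq⟩ := hshape C' (Finset.mem_filter.1 hC').1 j
          (Finset.mem_filter.1 hC').2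
        have hww : w' = w'' := by rw [hEq] at hw'; simpa using hw'
        subst hww
        exact derive_all hcΨ (fun ℓ => ℓ ∈ U₀) hcu (fun x y he => hcov x y he) w' hOK
      have hrc : ΥV.card ≤ U₀.card := replace_card hshape hPH hrep hmin hj U₀ hder
      have hinj : Function.Injective
          (fun ℓ : Lab X Y A B => (⟨{PV.u ℓ}, {PV.v j}⟩ : Clause (PV X Y A B))) := by
        intro ℓ₁ ℓ₂ h
        simpa [Clause.mk.injEq] using h
      have himg : U₀.image
          (fun ℓ => (⟨{PV.u ℓ}, {PV.v j}⟩ : Clause (PV X Y A B))) ⊆ ΥV := by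
        intro C' hC'
        obtain ⟨ℓ, hℓ, rfl⟩ := Finset.mem_image.1 hC'
        exact Finset.mem_filter.2 ⟨(Finset.mem_filter.1 hℓ).2,
          Finset.mem_union_right _ (Finset.mem_singleton_self _)⟩
      have hCnot : C ∉ U₀.image
          (fun ℓ => (⟨{PV.u ℓ}, {PV.v j}⟩ : Clause (PV X Y A B))) := by
        intro hmem
        obtain ⟨ℓ, hℓ, hEq⟩ := Finset.mem_image.1 hmem
        rw [hCeq] at hEq
        have : PV.u ℓ = w := by simpa [Clause.mk.injEq] using hEq
        exact hwne ℓ this.symm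
      have hins : insert C (U₀.image
          (fun ℓ => (⟨{PV.u ℓ}, {PV.v j}⟩ : Clause (PV X Y A B)))) ⊆ ΥV :=
        Finset.insert_subset hCV himg
      have hle := Finset.card_le_card hins
      rw [Finset.card_insert_of_notMem hCnot,
        Finset.card_image_of_injective _ hinj] at hle
      omega
    cases w with
    | u ℓ => exact ⟨ℓ, hCeq⟩
    | v m => exact absurd hwOK id
    | e x y i => exact (hA (by intro ℓ h; cases h)).elim
    | el x y b i => exact (hA (by intro ℓ h; cases h)).elim
  · -- Case B: cannot happen.
    exfalso
    simp only [not_forall] at hcov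
    obtain ⟨x₀, y₀, he₀, hnY⟩ := hcov
    -- an index i₀ not used by any head of a v(j)-clause
    have hpos_card : ∀ C' ∈ ΥV, C'.pos.card = 1 := by
      intro C' hC'
      obtain ⟨-, w', -, hEq⟩ := hshape C' (Finset.mem_filter.1 hC').1 j
        (Finset.mem_filter.1 hC').2
      rw [hEq]
      exact Finset.card_singleton _
    set idxOf : PV X Y A B → ℕ := fun p => match p with
      | PV.e _ _ i => i
      | PV.el _ _ _ i => i
      | _ => 0
      with hidxdef
    set S : Finset ℕ := ΥV.biUnion (fun C' => C'.pos.image idxOf) with hSdef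
    have hScard : S.card ≤ ΥV.card := by
      calc S.card ≤ ∑ C' ∈ ΥV, (C'.pos.image idxOf).card := Finset.card_biUnion_le
        _ ≤ ∑ C' ∈ ΥV, 1 := Finset.sum_le_sum (fun C' hC' =>
            le_trans Finset.card_image_le (le_of_eq (hpos_card C' hC')))
        _ = ΥV.card := by simp
    have hnotsub : ¬ (Finset.Icc 1 d ⊆ S) := by
      intro hsub
      have hcs := Finset.card_le_card hsub
      rw [Nat.card_Icc] at hcs
      omega
    obtain ⟨i₀, hi₀d, hi₀S⟩ := Finset.not_subset.1 hnotsub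
    have hi₀ : ∀ C' ∈ ΥV, ∀ p ∈ C'.pos, idxOf p ≠ i₀ := fun C' hC' p hp hEq =>
      hi₀S (Finset.mem_biUnion.2 ⟨C', hC', Finset.mem_image.2 ⟨p, hp, hEq⟩⟩)
    -- the closed assignment aT
    set aT : PV X Y A B → Bool := fun p => match p with
      | PV.u ℓ => decide (ℓ ∈ U₀)
      | PV.e _ y i => decide (i ≠ i₀ ∨ Ycov y)
      | PV.el x y b i => decide (i ≠ i₀ ∨ Ycov y ∨
          (Sum.inr (y, b) ∈ U₀ ∧ ∃ a, Sum.inl (x, a) ∈ U₀ ∧ (a, b) ∈ I.cst (x, y)))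
      | PV.v m => decide (m = j)
      with haTdef
    have haTu : ∀ ℓ, aT (PV.u ℓ) = decide (ℓ ∈ U₀) := fun ℓ => rfl
    have haTe : ∀ x y i, aT (PV.e x y i) = decide (i ≠ i₀ ∨ Ycov y) := fun x y i => rfl
    have haTel : ∀ x y b i, aT (PV.el x y b i) = decide (i ≠ i₀ ∨ Ycov y ∨
        (Sum.inr (y, b) ∈ U₀ ∧ ∃ a, Sum.inl (x, a) ∈ U₀ ∧ (a, b) ∈ I.cst (x, y))) :=
      fun x y b i => rfl
    have haTv : ∀ m, aT (PV.v m) = decide (m = j) := fun m => rfl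
    -- killV aT satisfies Φ
    have hbT : hFun I d t (killV aT) := by
      intro C' hC'
      rcases phi_cases hC' with ⟨x, y, a, b, i, he, hab, hi, rfl⟩ |
        ⟨x, y, b, i, he, hi, rfl⟩ | ⟨x, y, b, i, he, hi, rfl⟩ | ⟨ℓ, rfl⟩ |
        ⟨m, ℓ, hm, rfl⟩
      · -- clA
        by_cases h1 : aT (PV.u (Sum.inl (x, a))) = true
        · by_cases h2 : aT (PV.u (Sum.inr (y, b))) = true
          · refine Or.inl ⟨_, Finset.mem_singleton_self _, ?_⟩
            rw [killV_el, haTel, decide_eq_true_iff]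
            have hmem1 : Sum.inl (x, a) ∈ U₀ := by
              rw [haTu, decide_eq_true_iff] at h1; exact h1
            have hmem2 : Sum.inr (y, b) ∈ U₀ := by
              rw [haTu, decide_eq_true_iff] at h2; exact h2
            exact Or.inr (Or.inr ⟨hmem2, a, hmem1, hab⟩)
          · refine Or.inr ⟨PV.u (Sum.inr (y, b)), ?_, ?_⟩
            · exact Finset.mem_insert_of_mem (Finset.mem_singleton_self _)
            · rw [killV_u]; exact bool_ff h2
        · refine Or.inr ⟨PV.u (Sum.inl (x, a)), Finset.mem_insert_self _ _, ?_⟩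
          rw [killV_u]; exact bool_ff h1
      · -- clB
        by_cases hall : ∀ z ∈ Nbr I y, killV aT (PV.el z y b i) = true
        · refine Or.inl ⟨_, Finset.mem_singleton_self _, ?_⟩
          rw [killV_e, haTe x y i, decide_eq_true_iff]
          by_cases hii : i = i₀
          · subst hii
            refine Or.inr ?_
            by_contra hY
            have hx : x ∈ Nbr I y := by simp [Nbr, he]
            have h1 := hall x hx
            rw [killV_el, haTel, decide_eq_true_iff] at h1
            rcases h1 with h1 | h1 | h1
            · exact h1 rfl
            · exact hY h1
            · refine hY ⟨b, h1.1, fun z hz => ?_⟩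
              have hz1 := hall z hz
              rw [killV_el, haTel, decide_eq_true_iff] at hz1
              rcases hz1 with hz1 | hz1 | hz1
              · exact absurd rfl hz1
              · exact absurd hz1 hY
              · exact hz1.2
          · exact Or.inl hii
        · push_neg at hall
          obtain ⟨z, hz, hfz⟩ := hall
          exact Or.inr ⟨PV.el z y b i, Finset.mem_image_of_mem _ hz, bool_ff hfz⟩
      · -- clC
        by_cases h1 : aT (PV.e x y i) = true
        · refine Or.inl ⟨_, Finset.mem_singleton_self _, ?_⟩
          rw [killV_el, haTel, decide_eq_true_iff]
          rw [haTe x y i, decide_eq_true_iff] at h1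
          rcases h1 with h1 | h1
          · exact Or.inl h1
          · exact Or.inr (Or.inl h1)
        · refine Or.inr ⟨PV.e x y i, Finset.mem_singleton_self _, ?_⟩
          rw [killV_e]; exact bool_ff h1
      · -- clD
        refine Or.inr ⟨PV.e x₀ y₀ i₀, mem_bigBody.2 ⟨x₀, y₀, i₀, he₀, hi₀d, rfl⟩, ?_⟩
        rw [killV_e, haTe x₀ y₀ i₀]
        simp [hnY]
      · -- clE
        exact Or.inr ⟨PV.v m, Finset.mem_singleton_self _, killV_v m⟩
    -- aT satisfies Υ
    have haT : evalCNF Υ aT := by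
      intro C' hC'
      by_cases hv : ∃ k : ℕ, PV.v k ∈ C'.pos ∪ C'.neg
      · obtain ⟨k, hk⟩ := hv
        obtain ⟨hkt, w', hw'OK, hEq⟩ := hshape C' hC' k hk
        by_cases hkj : k = j
        · subst hkj
          have hC'V : C' ∈ ΥV := Finset.mem_filter.2 ⟨hC',
            by rw [hEq]; exact Finset.mem_union_right _ (Finset.mem_singleton_self _)⟩
          refine Or.inl ⟨w', by rw [hEq]; exact Finset.mem_singleton_self _, ?_⟩
          have hidx : idxOf w' ≠ i₀ :=
            hi₀ C' hC'V w' (by rw [hEq]; exact Finset.mem_singleton_self _)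
          cases w' with
          | u ℓ =>
            have hmem : ℓ ∈ U₀ := Finset.mem_filter.2 ⟨Finset.mem_univ _,
              by rw [← hEq]; exact hC'⟩
            rw [haTu]
            simpa using hmem
          | e x y i =>
            rw [haTe x y i, decide_eq_true_iff]
            exact Or.inl hidx
          | el x y b i =>
            rw [haTel, decide_eq_true_iff]
            exact Or.inl hidx
          | v m => exact absurd hw'OK id
        · refine Or.inr ⟨PV.v k, by rw [hEq]; exact Finset.mem_singleton_self _, ?_⟩
          rw [haTv]
          simpa using hkj
      · push_neg at hv
        have hbe := (hrep (killV aT)).2 hbT C' hC'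
        refine (eval_congr' (a := aT) (b := killV aT) ?_).2 hbe
        intro p hp
        exact (killV_nonv (fun k hk => hv k (hk ▸ hp))).symm
    have hhaT : hFun I d t aT := (hrep aT).1 haT
    obtain ⟨ℓ₀, hℓ₀⟩ : ∃ ℓ₀ : Lab X Y A B, ℓ₀ ∉ U₀ := by
      by_contra h
      push_neg at h
      apply hnY
      obtain ⟨f, g, hg, hcw⟩ := hfeas
      obtain ⟨b, hb⟩ := hg y₀
      refine ⟨b, h _, fun z hz => ?_⟩
      have hz' : (z, y₀) ∈ I.E := by simpa [Nbr] using hz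
      obtain ⟨a, _, hab⟩ := hcw (z, y₀) hz' b hb
      exact ⟨a, h _, hab⟩
    have hev := hhaT _ (Finset.mem_union_right _ (mem_clE hj ℓ₀))
    have hfin : aT (PV.u ℓ₀) = true := by
      refine eval_head hev ?_
      intro n hn
      rw [Finset.mem_singleton] at hn
      subst hn
      rw [haTv]
      simp
    rw [haTu, decide_eq_true_iff] at hfin
    exact hℓ₀ hfin
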